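/- Let G be a group acting by measure-class preserving automorphisms on a standard probability space (X,μ), acting on a separable metric space (Z,d) by isometries, and suppose the diagonal G-action on X × X is ergodic. Then any G-equivariant measurable map φ : X → Z is essentially constant. -/

import Mathlib

open MeasureTheory

noncomputable section

/-- Let `G` act by measure-class preserving measurable automorphisms on a
standard probability space `(X,μ)` and by isometries on a separable metric space `Z`, and
suppose the diagonal `G`-action on `X × X` is ergodic.  Then any `G`-equivariant measurable
map `φ : X → Z` is essentially constant. -/
theorem equivariant_map_essentially_constant
    {G : Type*} [Group G]
    {X : Type*} [MeasurableSpace X] [StandardBorelSpace X]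
    [MulAction G X] (hmeas : ∀ g : G, Measurable (fun x : X => g • x))
    (μ : Measure X) [IsProbabilityMeasure μ]
    (hqmp : ∀ g : G, μ.map (fun x : X => g • x) ≪ μ ∧ μ ≪ μ.map (fun x : X => g • x))
    (herg : ∀ A : Set (X × X), MeasurableSet A →
      (∀ g : G, (fun p : X × X => (g • p.1, g • p.2)) ⁻¹' A = A) →
      (μ.prod μ) A = 0 ∨ (μ.prod μ) Aᶜ = 0)
    {Z : Type*} [MetricSpace Z] [TopologicalSpace.SeparableSpace Z]
    [MeasurableSpace Z] [BorelSpace Z] [MulAction G Z]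
    (hiso : ∀ (g : G) (z z' : Z), dist (g • z) (g • z') = dist z z')
    (φ : X → Z) (hφ : Measurable φ)
    (hequiv : ∀ (g : G) (x : X), φ (g • x) = g • φ x) :
    ∃ z₀ : Z, ∀ᵐ x ∂μ, φ x = z₀ := by
  haveI : SecondCountableTopology Z :=
    UniformSpace.secondCountable_of_separable Z
  have hF : Measurable (fun p : X × X => dist (φ p.1) (φ p.2)) :=
    (hφ.comp measurable_fst).dist (hφ.comp measurable_snd)
  -- positivity of {dist < ε} for every ε > 0
  have hpos : ∀ ε : ℝ, 0 < ε → 0 < (μ.prod μ) {p : X × X | dist (φ p.1) (φ p.2) < ε} := by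
    intro ε hε
    obtain ⟨s, hsc, hsd⟩ := TopologicalSpace.exists_countable_dense Z
    have hcover : (Set.univ : Set X) ⊆ ⋃ c ∈ s, φ ⁻¹' Metric.ball c (ε / 2) := by
      intro x _
      have hz : φ x ∈ closure s := hsd (φ x)
      obtain ⟨c, hc, hcd⟩ := Metric.mem_closure_iff.mp hz (ε / 2) (by linarith)
      exact Set.mem_biUnion hc (by simpa [Metric.mem_ball, dist_comm] using hcd)
    have : ∃ c ∈ s, 0 < μ (φ ⁻¹' Metric.ball c (ε / 2)) := by
      by_contra h
      push_neg at h
      have hnull : μ (⋃ c ∈ s, φ ⁻¹' Metric.ball c (ε / 2)) = 0 := by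
        refine (measure_biUnion_null_iff hsc).mpr ?_
        intro c hc
        exact le_antisymm (h c hc) zero_le
      have := measure_mono_null hcover hnull
      simp [measure_univ] at this
    obtain ⟨c, _, hc⟩ := this
    set B := φ ⁻¹' Metric.ball c (ε / 2) with hB
    have hBm : MeasurableSet B := hφ measurableSet_ball
    have hsub : B ×ˢ B ⊆ {p : X × X | dist (φ p.1) (φ p.2) < ε} := by
      rintro ⟨x, y⟩ ⟨hx, hy⟩
      simp only [hB, Set.mem_preimage, Metric.mem_ball] at hx hy
      have := dist_triangle (φ x) c (φ y)
      have := dist_comm (φ y) c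
      simp only [Set.mem_setOf_eq]
      calc dist (φ x) (φ y) ≤ dist (φ x) c + dist c (φ y) := dist_triangle _ _ _
        _ < ε / 2 + ε / 2 := by rw [dist_comm c (φ y)]; exact add_lt_add hx hy
        _ = ε := by ring
    calc (0 : ENNReal) < μ B * μ B := ENNReal.mul_pos hc.ne' hc.ne'
      _ = (μ.prod μ) (B ×ˢ B) := (Measure.prod_prod B B).symm
      _ ≤ _ := measure_mono hsub
  -- each {dist < 1/(n+1)} is invariant, measurable, of positive measure, hence conull
  have hconull : ∀ n : ℕ,
      (μ.prod μ) {p : X × X | dist (φ p.1) (φ p.2) < 1 / (n + 1)}ᶜ = 0 := by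
    intro n
    set A := {p : X × X | dist (φ p.1) (φ p.2) < 1 / (n + 1)} with hA
    have hAm : MeasurableSet A := measurableSet_lt hF measurable_const
    have hinv : ∀ g : G, (fun p : X × X => (g • p.1, g • p.2)) ⁻¹' A = A := by
      intro g
      ext ⟨x, y⟩
      simp only [hA, Set.mem_preimage, Set.mem_setOf_eq, hequiv, hiso]
    rcases herg A hAm hinv with h | h
    · exact absurd h (hpos (1 / (n + 1)) (by positivity)).ne'
    · exact h
  -- hence {φ x = φ y} is conull
  have hne : (μ.prod μ) {p : X × X | φ p.1 ≠ φ p.2} = 0 := by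
    have hsub : {p : X × X | φ p.1 ≠ φ p.2} ⊆
        ⋃ n : ℕ, {p : X × X | dist (φ p.1) (φ p.2) < 1 / (n + 1)}ᶜ := by
      rintro ⟨x, y⟩ hxy
      have hd : 0 < dist (φ x) (φ y) := dist_pos.mpr hxy
      obtain ⟨n, hn⟩ := exists_nat_one_div_lt hd
      exact Set.mem_iUnion.mpr ⟨n, fun h => absurd h (not_lt.mpr hn.le)⟩
    exact measure_mono_null hsub (measure_iUnion_null hconull)
  have hnem : MeasurableSet {p : X × X | φ p.1 ≠ φ p.2} := by
    have heq : {p : X × X | φ p.1 ≠ φ p.2}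
        = ((fun p : X × X => dist (φ p.1) (φ p.2)) ⁻¹' {0})ᶜ := by
      ext p
      simp [dist_eq_zero]
    rw [heq]
    exact (hF (measurableSet_singleton 0)).compl
  have hfib : ∀ᵐ x ∂μ, μ (Prod.mk x ⁻¹' {p : X × X | φ p.1 ≠ φ p.2}) = 0 :=
    (Measure.measure_prod_null hnem).mp hne
  obtain ⟨x, hx⟩ := hfib.exists
  refine ⟨φ x, ?_⟩
  have : μ {y : X | φ x ≠ φ y} = 0 := by
    simpa [Set.preimage, Set.mem_setOf_eq] using hx
  filter_upwards [(measure_eq_zero_iff_ae_notMem.mp this)] with y hy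
  simpa [Set.mem_setOf_eq, eq_comm] using hy

end
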